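/- Let A ∈ ℝ^{n×m}, b ∈ ℝⁿ, c, x ∈ ℝ^m with x > 0 and c ≥ 0, and suppose every nonzero kernel element of A has positive cost cᵀ|z| > 0. Then the minimum energy feasible solution q (the minimizer of Σ_e (c_e/x_e) f_e² subject to Af = b) lies in the convex hull of the basic feasible solutions of {Af = b} sign-compatible with q; in particular, the kernel component in its sign-compatible decomposition is zero. -/

import Mathlib

/-- A basic solution of {f : Af = b}: a feasible vector whose support columns
are linearly independent. -/
def IsBasicSol {n m : ℕ} (A : Matrix (Fin n) (Fin m) ℝ) (b : Fin n → ℝ)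
    (f : Fin m → ℝ) : Prop :=
  A.mulVec f = b ∧
    LinearIndependent ℝ (fun j : {j : Fin m // f j ≠ 0} => fun i => A i j.1)

/-- Conformal decomposition induction: if the only kernel vector sign-compatible
with `q` is zero, then every feasible vector sign-compatible with `q` is in the
convex hull of the basic feasible solutions sign-compatible with `q`. -/
lemma aux_decomp {n m : ℕ} (A : Matrix (Fin n) (Fin m) ℝ) (b : Fin n → ℝ) (q : Fin m → ℝ)
    (hz0 : ∀ z : Fin m → ℝ, A.mulVec z = 0 → (∀ e, z e ≠ 0 → 0 < z e * q e) → z = 0) :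
    ∀ k : ℕ, ∀ f : Fin m → ℝ, A.mulVec f = b → (∀ e, f e ≠ 0 → 0 < f e * q e) →
      (Finset.univ.filter (fun e => f e ≠ 0)).card ≤ k →
      f ∈ convexHull ℝ {g : Fin m → ℝ | IsBasicSol A b g ∧ ∀ e, g e ≠ 0 → 0 < g e * q e} := by
  classical
  intro k
  induction k with
  | zero =>
    intro f hf hcomp hcard
    have hempty : ∀ e, f e = 0 := by
      intro e
      by_contra he
      have hmem : e ∈ Finset.univ.filter (fun e => f e ≠ 0) := by simp [he]
      have := Finset.card_pos.mpr ⟨e, hmem⟩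
      omega
    have hE : IsEmpty {j : Fin m // f j ≠ 0} := ⟨fun j => j.2 (hempty j.1)⟩
    exact subset_convexHull ℝ _ ⟨⟨hf, linearIndependent_empty_type⟩, hcomp⟩
  | succ k ih =>
    intro f hf hcomp hcard
    by_cases hLI : LinearIndependent ℝ (fun j : {j : Fin m // f j ≠ 0} => fun i => A i j.1)
    · exact subset_convexHull ℝ _ ⟨⟨hf, hLI⟩, hcomp⟩
    obtain ⟨g, hgsum, i0, hgi0⟩ := Fintype.not_linearIndependent_iff.mp hLI
    set z : Fin m → ℝ := fun e => if h : f e ≠ 0 then g ⟨e, h⟩ else 0 with hzdef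
    have hzsupp : ∀ e, z e ≠ 0 → f e ≠ 0 := by
      intro e hze
      by_contra hfe
      simp [hzdef, hfe] at hze
    have hAz : A.mulVec z = 0 := by
      funext i
      have h1 : (∑ j : {j : Fin m // f j ≠ 0}, g j * A i j.1) = 0 := by
        have := congrFun hgsum i
        simpa using this
      show (∑ e, A i e * z e) = 0
      rw [← Fintype.sum_subtype_add_sum_subtype (fun e => f e ≠ 0)
        (fun e => A i e * z e)]
      have e1 : ∑ j : {e : Fin m // f e ≠ 0}, A i j.1 * z j.1
          = ∑ j : {e : Fin m // f e ≠ 0}, g j * A i j.1 := by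
        refine Finset.sum_congr rfl fun j _ => ?_
        have : z j.1 = g j := by simp [hzdef, j.2]
        rw [this, mul_comm]
      have e2 : ∑ j : {e : Fin m // ¬ f e ≠ 0}, A i j.1 * z j.1 = 0 := by
        refine Finset.sum_eq_zero fun j _ => ?_
        have : z j.1 = 0 := by simp [hzdef, j.2]
        simp [this]
      rw [e1, e2, h1, add_zero]
    have hzne : z ≠ 0 := by
      intro h
      apply hgi0
      have : z i0.1 = g i0 := by simp [hzdef, i0.2]
      rw [h] at this
      simpa using this.symm
    -- the two crossing sets are nonempty
    have hSneg : ∃ e, z e * f e < 0 := by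
      have hnc : ¬ (∀ e, z e ≠ 0 → 0 < z e * q e) := fun hcc => hzne (hz0 z hAz hcc)
      push_neg at hnc
      obtain ⟨e, hze, hzq⟩ := hnc
      have hfe := hzsupp e hze
      have hfq := hcomp e hfe
      have hqe : q e ≠ 0 := by
        intro h; rw [h] at hfq; simp at hfq
      have hzq' : z e * q e < 0 := lt_of_le_of_ne hzq (mul_ne_zero hze hqe)
      refine ⟨e, ?_⟩
      nlinarith [sq_nonneg (q e), mul_neg_of_neg_of_pos hzq' hfq]
    have hSpos : ∃ e, 0 < z e * f e := by
      have hAz' : A.mulVec (-z) = 0 := by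
        rw [Matrix.mulVec_neg, hAz, neg_zero]
      have hzne' : (-z : Fin m → ℝ) ≠ 0 := by
        intro h
        apply hzne
        funext e
        have := congrFun h e
        simpa using this
      have hnc : ¬ (∀ e, (-z) e ≠ 0 → 0 < (-z) e * q e) := fun hcc => hzne' (hz0 _ hAz' hcc)
      push_neg at hnc
      obtain ⟨e, hze', hzq⟩ := hnc
      have hze : z e ≠ 0 := by simpa using hze'
      have hfe := hzsupp e hze
      have hfq := hcomp e hfe
      have hqe : q e ≠ 0 := by
        intro h; rw [h] at hfq; simp at hfq
      have hzq' : 0 < z e * q e := by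
        have h1 : (-z) e * q e ≤ 0 := hzq
        have h2 : (-z) e * q e = -(z e * q e) := by simp [neg_mul]
        have h3 : 0 ≤ z e * q e := by rw [h2] at h1; linarith
        exact lt_of_le_of_ne h3 (Ne.symm (mul_ne_zero hze hqe))
      refine ⟨e, ?_⟩
      nlinarith [sq_nonneg (q e), mul_pos hzq' hfq]
    set Sneg : Finset (Fin m) := Finset.univ.filter (fun e => z e * f e < 0) with hSnegdef
    set Spos : Finset (Fin m) := Finset.univ.filter (fun e => 0 < z e * f e) with hSposdef
    have hSnegne : Sneg.Nonempty := by
      obtain ⟨e, he⟩ := hSneg; exact ⟨e, by simp [hSnegdef, he]⟩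
    have hSposne : Spos.Nonempty := by
      obtain ⟨e, he⟩ := hSpos; exact ⟨e, by simp [hSposdef, he]⟩
    set tp : ℝ := Sneg.inf' hSnegne (fun e => -(f e) / z e) with htpdef
    set tn : ℝ := Spos.sup' hSposne (fun e => -(f e) / z e) with htndef
    have htp : 0 < tp := by
      rw [htpdef, Finset.lt_inf'_iff]
      intro e he
      rw [hSnegdef, Finset.mem_filter] at he
      have hzf : z e * f e < 0 := he.2
      have hze : z e ≠ 0 := by intro h; rw [h] at hzf; simp at hzf
      have heq2 : -(f e) / z e = -(z e * f e) / (z e)^2 := by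
        field_simp
      rw [heq2]
      exact div_pos (by linarith) ((sq_nonneg _).lt_of_ne (Ne.symm (pow_ne_zero 2 hze)))
    have htn : tn < 0 := by
      rw [htndef, Finset.sup'_lt_iff]
      intro e he
      rw [hSposdef, Finset.mem_filter] at he
      have hzf : 0 < z e * f e := he.2
      have hze : z e ≠ 0 := by intro h; rw [h] at hzf; simp at hzf
      have heq : -(f e) / z e = -((z e * f e) / (z e)^2) := by
        field_simp
      rw [heq, neg_lt, neg_zero]
      exact div_pos hzf ((sq_nonneg _).lt_of_ne (Ne.symm (pow_ne_zero 2 hze)))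
    -- sign preservation bound
    have hb : ∀ t : ℝ, tn ≤ t → t ≤ tp → ∀ e, 0 ≤ f e * (f e + t * z e) := by
      intro t htl htu e
      rcases eq_or_ne (z e) 0 with hze | hze
      · rw [hze]; ring_nf; positivity
      have hfe := hzsupp e hze
      rcases lt_trichotomy (z e * f e) 0 with hzf | hzf | hzf
      · have hmem : e ∈ Sneg := by simp [hSnegdef, hzf]
        have hle : t ≤ -(f e) / z e := by
          refine le_trans htu ?_
          rw [htpdef]
          exact Finset.inf'_le _ hmem
        have hkey : t * (f e * z e) ≥ (-(f e) / z e) * (f e * z e) := by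
          apply mul_le_mul_of_nonpos_right hle
          linarith [hzf, mul_comm (z e) (f e)]
        have heq : (-(f e) / z e) * (f e * z e) = -(f e)^2 := by
          field_simp
        nlinarith
      · exact absurd hzf (mul_ne_zero hze hfe)
      · have hmem : e ∈ Spos := by simp [hSposdef, hzf]
        have hge : -(f e) / z e ≤ t := by
          refine le_trans ?_ htl
          rw [htndef]
          exact Finset.le_sup' (fun e => -f e / z e) hmem
        have hkey : (-(f e) / z e) * (f e * z e) ≤ t * (f e * z e) := by
          apply mul_le_mul_of_nonneg_right hge
          linarith [mul_comm (z e) (f e)]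
        have heq : (-(f e) / z e) * (f e * z e) = -(f e)^2 := by
          field_simp
        nlinarith
    -- the two endpoint vectors
    have hfeas : ∀ t : ℝ, A.mulVec (f + t • z) = b := by
      intro t
      rw [Matrix.mulVec_add, Matrix.mulVec_smul, hAz, hf]
      simp
    have hcompat : ∀ t : ℝ, tn ≤ t → t ≤ tp →
        ∀ e, (f + t • z) e ≠ 0 → 0 < (f + t • z) e * q e := by
      intro t htl htu e hne
      have happ : (f + t • z) e = f e + t * z e := by
        simp [smul_eq_mul]
      rw [happ] at hne ⊢
      rcases eq_or_ne (z e) 0 with hze | hze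
      · rw [hze] at hne ⊢
        simp only [mul_zero, add_zero] at hne ⊢
        exact hcomp e hne
      have hfe := hzsupp e hze
      have hfq := hcomp e hfe
      have hP : 0 ≤ f e * (f e + t * z e) := hb t htl htu e
      have hP' : 0 < f e * (f e + t * z e) :=
        lt_of_le_of_ne hP (Ne.symm (mul_ne_zero hfe hne))
      nlinarith [mul_pos hP' hfq, sq_nonneg (f e)]
    have hsubset : ∀ t : ℝ, Finset.univ.filter (fun e => (f + t • z) e ≠ 0)
        ⊆ Finset.univ.filter (fun e => f e ≠ 0) := by
      intro t e he
      simp only [Finset.mem_filter, Finset.mem_univ, true_and] at he ⊢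
      intro hfe
      apply he
      have hze : z e = 0 := by
        by_contra h
        exact hzsupp e h hfe
      simp [hfe, hze, smul_eq_mul]
    have hcardp : (Finset.univ.filter (fun e => (f + tp • z) e ≠ 0)).card ≤ k := by
      obtain ⟨e0, he0mem, he0⟩ := Finset.exists_mem_eq_inf' hSnegne (fun e => -(f e) / z e)
      rw [hSnegdef, Finset.mem_filter] at he0mem
      have hzf : z e0 * f e0 < 0 := he0mem.2
      have hze : z e0 ≠ 0 := by intro h; rw [h] at hzf; simp at hzf
      have hfe : f e0 ≠ 0 := by intro h; rw [h] at hzf; simp at hzf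
      have hzero : (f + tp • z) e0 = 0 := by
        have : tp = -(f e0) / z e0 := he0
        simp only [Pi.add_apply, Pi.smul_apply, smul_eq_mul, this]
        field_simp
        ring
      have hss : Finset.univ.filter (fun e => (f + tp • z) e ≠ 0)
          ⊂ Finset.univ.filter (fun e => f e ≠ 0) := by
        refine ⟨hsubset tp, fun hsub => ?_⟩
        have : e0 ∈ Finset.univ.filter (fun e => (f + tp • z) e ≠ 0) :=
          hsub (by simp [hfe])
        simp only [Finset.mem_filter] at this
        exact this.2 hzero
      have := Finset.card_lt_card hss
      omega
    have hcardn : (Finset.univ.filter (fun e => (f + tn • z) e ≠ 0)).card ≤ k := by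
      obtain ⟨e0, he0mem, he0⟩ := Finset.exists_mem_eq_sup' hSposne (fun e => -(f e) / z e)
      rw [hSposdef, Finset.mem_filter] at he0mem
      have hzf : 0 < z e0 * f e0 := he0mem.2
      have hze : z e0 ≠ 0 := by intro h; rw [h] at hzf; simp at hzf
      have hfe : f e0 ≠ 0 := by intro h; rw [h] at hzf; simp at hzf
      have hzero : (f + tn • z) e0 = 0 := by
        have : tn = -(f e0) / z e0 := he0
        simp only [Pi.add_apply, Pi.smul_apply, smul_eq_mul, this]
        field_simp
        ring
      have hss : Finset.univ.filter (fun e => (f + tn • z) e ≠ 0)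
          ⊂ Finset.univ.filter (fun e => f e ≠ 0) := by
        refine ⟨hsubset tn, fun hsub => ?_⟩
        have : e0 ∈ Finset.univ.filter (fun e => (f + tn • z) e ≠ 0) :=
          hsub (by simp [hfe])
        simp only [Finset.mem_filter] at this
        exact this.2 hzero
      have := Finset.card_lt_card hss
      omega
    have hmemp := ih (f + tp • z) (hfeas tp) (hcompat tp (by linarith) le_rfl) hcardp
    have hmemn := ih (f + tn • z) (hfeas tn) (hcompat tn le_rfl (by linarith)) hcardn
    -- f is a convex combination of the two endpoints
    have hd : 0 < tp - tn := by linarith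
    set a : ℝ := tp / (tp - tn) with hadef
    set a' : ℝ := (-tn) / (tp - tn) with ha'def
    have ha : 0 ≤ a := by positivity
    have ha' : 0 ≤ a' := by
      rw [ha'def]
      apply div_nonneg (by linarith) (by linarith)
    have hd0 : tp - tn ≠ 0 := ne_of_gt hd
    have hsum : a + a' = 1 := by
      rw [hadef, ha'def, ← add_div, div_eq_one_iff_eq hd0]
      ring
    have hcomb : a • (f + tn • z) + a' • (f + tp • z) = f := by
      funext e
      simp only [Pi.add_apply, Pi.smul_apply, smul_eq_mul, hadef, ha'def]
      field_simp
      ring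
    have := (convex_convexHull ℝ _) hmemn hmemp ha ha' hsum
    rwa [hcomb] at this

/-- The minimum energy feasible solution is kernel-free: it lies in the convex
hull of the basic feasible solutions sign-compatible with it. -/
theorem min_energy_kernel_free {n m : ℕ} (A : Matrix (Fin n) (Fin m) ℝ)
    (b : Fin n → ℝ) (c x : Fin m → ℝ)
    (hc : 0 ≤ c) (hx : ∀ e, 0 < x e)
    (hker : ∀ z : Fin m → ℝ, A.mulVec z = 0 → z ≠ 0 → 0 < ∑ e, c e * |z e|)
    (q : Fin m → ℝ) (hq : A.mulVec q = b)
    (hmin : ∀ f : Fin m → ℝ, A.mulVec f = b →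
      ∑ e, (c e / x e) * (q e) ^ 2 ≤ ∑ e, (c e / x e) * (f e) ^ 2) :
    q ∈ convexHull ℝ
      {g : Fin m → ℝ | IsBasicSol A b g ∧ ∀ e, g e ≠ 0 → 0 < g e * q e} := by
  have hc' : ∀ e, 0 ≤ c e := fun e => hc e
  set w : Fin m → ℝ := fun e => c e / x e with hwdef
  have hwnn : ∀ e, 0 ≤ w e := fun e => div_nonneg (hc' e) (hx e).le
  have hz0 : ∀ z : Fin m → ℝ, A.mulVec z = 0 → (∀ e, z e ≠ 0 → 0 < z e * q e) → z = 0 := by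
    intro z hAz hcompat
    by_contra hzne
    set L : ℝ := ∑ e, w e * (q e * z e) with hLdef
    set M : ℝ := ∑ e, w e * (z e)^2 with hMdef
    have hfeas : ∀ t : ℝ, A.mulVec (q + t • z) = b := by
      intro t
      rw [Matrix.mulVec_add, Matrix.mulVec_smul, hAz, hq]
      simp
    have hexp : ∀ t : ℝ, (∑ e, w e * ((q + t • z) e)^2)
        = (∑ e, w e * (q e)^2) + (2*t) * L + t^2 * M := by
      intro t
      rw [hLdef, hMdef, Finset.mul_sum, Finset.mul_sum, ← Finset.sum_add_distrib,
        ← Finset.sum_add_distrib]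
      refine Finset.sum_congr rfl fun e _ => ?_
      simp only [Pi.add_apply, Pi.smul_apply, smul_eq_mul]
      ring
    have hineq : ∀ t : ℝ, 0 ≤ 2*t*L + t^2*M := by
      intro t
      have h := hmin (q + t • z) (hfeas t)
      have h2 := hexp t
      simp only [hwdef] at h2
      linarith [h, h2.symm.le, h2.le]
    have hM : 0 < M := by
      have hex : ∃ e, 0 < c e * |z e| := by
        by_contra hcon
        push_neg at hcon
        have : (∑ e, c e * |z e|) ≤ 0 := Finset.sum_nonpos (fun e _ => hcon e)
        linarith [hker z hAz hzne]
      obtain ⟨e, he⟩ := hex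
      have hce : 0 < c e := by
        rcases (hc' e).lt_or_eq with h | h
        · exact h
        · rw [← h] at he; simp at he
      have hze : z e ≠ 0 := by
        intro h; rw [h] at he; simp at he
      have hterm : 0 < w e * (z e)^2 := by
        have h1 : 0 < w e := div_pos hce (hx e)
        have h2 : 0 < (z e)^2 := (sq_nonneg (z e)).lt_of_ne (Ne.symm (pow_ne_zero 2 hze))
        exact mul_pos h1 h2
      calc 0 < w e * (z e)^2 := hterm
        _ ≤ M := Finset.single_le_sum
            (fun i _ => mul_nonneg (hwnn i) (sq_nonneg (z i))) (Finset.mem_univ e)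
    have hL : L = 0 := by
      have h := hineq (-(L/M))
      have hM0 : M ≠ 0 := ne_of_gt hM
      have hcalc : 2*(-(L/M))*L + (-(L/M))^2*M = -(L^2/M) := by
        field_simp
        ring
      rw [hcalc] at h
      have h2 : L^2/M ≤ 0 := by linarith
      have h3 : L^2 ≤ 0 := by
        by_contra hpos
        push_neg at hpos
        have := div_pos hpos hM
        linarith
      have h4 : L^2 = 0 := le_antisymm h3 (sq_nonneg L)
      exact pow_eq_zero_iff two_ne_zero |>.mp h4
    have htermnn : ∀ e ∈ Finset.univ, 0 ≤ w e * (q e * z e) := by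
      intro e _
      rcases eq_or_ne (z e) 0 with hze | hze
      · simp [hze]
      · have := hcompat e hze
        exact mul_nonneg (hwnn e) (by linarith [mul_comm (z e) (q e)])
    have hallzero := (Finset.sum_eq_zero_iff_of_nonneg htermnn).mp hL
    have hce : ∀ e, z e ≠ 0 → c e = 0 := by
      intro e hze
      have h := hallzero e (Finset.mem_univ e)
      have hpos : 0 < q e * z e := by
        have := hcompat e hze
        linarith [mul_comm (z e) (q e)]
      have hwe : w e = 0 := by
        rcases mul_eq_zero.mp h with h' | h'
        · exact h'
        · exact absurd h' (ne_of_gt hpos)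
      rw [hwdef] at hwe
      rcases div_eq_zero_iff.mp hwe with h' | h'
      · exact h'
      · exact absurd h' (ne_of_gt (hx e))
    have hzero : (∑ e, c e * |z e|) = 0 := by
      refine Finset.sum_eq_zero fun e _ => ?_
      rcases eq_or_ne (z e) 0 with hze | hze
      · simp [hze]
      · simp [hce e hze]
    linarith [hker z hAz hzne]
  have hqcomp : ∀ e, q e ≠ 0 → 0 < q e * q e := by
    intro e he
    rcases lt_or_gt_of_ne he with h | h
    · exact mul_pos_of_neg_of_neg h h
    · exact mul_pos h h
  exact aux_decomp A b q hz0 (Finset.univ.filter (fun e => q e ≠ 0)).card q hq hqcomp le_rfl
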